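/- Let p be a prime and let m ≥ s ≥ 1 be integers. Let G be an elementary abelian p-group of order p^{2m} and let H be ANY group of order p^s. Then there exists a bent function f : G → H; that is, a function f such that for every z ∈ G with z ≠ 1 and every b ∈ H, the number of x ∈ G with f(x·z)·f(x)⁻¹ = b equals p^{2m−s}. (In particular, the existence of a bent function from G onto a group of order p^s does not depend on the isomorphism type of H.) -/

import Mathlib

open Finset

private lemma bal_int {F : Type*} [Fintype F] {H : Type*} [DecidableEq H]
    (τ : F → H) (k : ℕ) (hτ : ∀ c : H, (univ.filter fun v => τ v = c).card = k)
    (c : H) : ∑ v : F, (if τ v = c then (1:ℤ) else 0) = k := by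
  classical
  have := hτ c
  rw [Finset.card_filter] at this
  rw [← this]
  push_cast
  rfl

private lemma bent_case_zero {F : Type*} [Field F] [Fintype F] [DecidableEq F]
    {H : Type*} [Group H] [DecidableEq H] (τ : F → H) (k : ℕ)
    (hbal : ∀ c : H, ∑ v : F, (if τ v = c then (1:ℤ) else 0) = k)
    (b : F) (hb : b ≠ 0) (h : H) :
    ∑ x : F, ∑ y : F, (if
        ((if x = 0 then 1 else τ ((y + b) * x⁻¹)) *
        (if x = 0 then (1:H) else τ (y * x⁻¹))⁻¹ = h) then (1:ℤ) else 0)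
      = (Fintype.card F : ℤ) * k := by
  classical
  set A : F → ℤ := fun c => ∑ v : F, (if τ (v + c) * (τ v)⁻¹ = h then (1:ℤ) else 0) with hA
  have step1 : ∀ x : F, (∑ y : F, (if
        ((if x = 0 then 1 else τ ((y + b) * x⁻¹)) *
        (if x = 0 then (1:H) else τ (y * x⁻¹))⁻¹ = h) then (1:ℤ) else 0)) = A (b * x⁻¹) := by
    intro x
    rcases eq_or_ne x 0 with hx | hx
    · subst hx
      simp only [hA, if_pos rfl, one_mul, inv_one, mul_zero, inv_zero, add_zero,
        mul_inv_cancel]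
    · have hbij : Function.Bijective (fun v : F => x * v) := (Equiv.mulLeft₀ x hx).bijective
      rw [hA]
      refine (Fintype.sum_bijective _ hbij _ _ ?_).symm
      intro v
      simp only [hx, if_neg, if_false]
      congr 2
      field_simp
      try ring_nf
  have step2 : ∑ x : F, A (b * x⁻¹) = ∑ c : F, A c := by
    have hinv : Function.Involutive (fun x : F => b * x⁻¹) := by
      intro x
      rcases eq_or_ne x 0 with hx | hx
      · simp [hx]
      · field_simp
    exact Equiv.sum_comp hinv.toPerm A
  have step3 : ∑ c : F, A c = (Fintype.card F : ℤ) * k := by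
    rw [hA]
    rw [Finset.sum_comm]
    have : ∀ v : F, ∑ c : F, (if τ (v + c) * (τ v)⁻¹ = h then (1:ℤ) else 0) = k := by
      intro v
      have hbij : Function.Bijective (fun c : F => v + c) := (Equiv.addLeft v).bijective
      refine Eq.trans (Fintype.sum_bijective _ hbij _
        (fun u => if τ u = h * τ v then (1:ℤ) else 0) ?_) (hbal _)
      intro c
      simp only [mul_inv_eq_iff_eq_mul]
    simp [this, Finset.sum_const, mul_comm]
  rw [Fintype.sum_congr _ _ step1, step2, step3]

private lemma bent_case_ne {F : Type*} [Field F] [Fintype F] [DecidableEq F]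
    {H : Type*} [Group H] [DecidableEq H] (τ : F → H) (k : ℕ)
    (hbal : ∀ c : H, ∑ v : F, (if τ v = c then (1:ℤ) else 0) = k)
    (a b : F) (ha : a ≠ 0) (h : H) :
    ∑ x : F, ∑ y : F, (if
        ((if x + a = 0 then 1 else τ ((y + b) * (x + a)⁻¹)) *
        (if x = 0 then (1:H) else τ (y * x⁻¹))⁻¹ = h) then (1:ℤ) else 0)
      = (Fintype.card F : ℤ) * k := by
  classical
  set q : ℤ := (Fintype.card F : ℤ) with hq
  set I1 : ℤ := if h = 1 then 1 else 0 with hI1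
  set β : F := b * a⁻¹ with hβ
  set B : F → F → ℤ := fun t v => if τ (t * (v - β) + β) = h * τ v then 1 else 0 with hB
  set inner : F → ℤ := fun x => ∑ y : F, (if
        ((if x + a = 0 then 1 else τ ((y + b) * (x + a)⁻¹)) *
        (if x = 0 then (1:H) else τ (y * x⁻¹))⁻¹ = h) then (1:ℤ) else 0) with hinner
  have hna : (-a : F) ≠ 0 := neg_ne_zero.mpr ha
  -- the two special lines
  have inner0 : inner 0 = k := by
    rw [hinner]
    refine (Fintype.sum_bijective (fun y : F => (y + b) * a⁻¹)
      (((Equiv.addRight b).trans (Equiv.mulRight₀ a⁻¹ (inv_ne_zero ha))).bijective)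
      _ (fun u => if τ u = h then (1:ℤ) else 0) ?_).trans (hbal h)
    intro y
    simp [ha]
  have innera : inner (-a) = k := by
    rw [hinner]
    refine (Fintype.sum_bijective (fun y : F => y * (-a)⁻¹)
      ((Equiv.mulRight₀ (-a)⁻¹ (inv_ne_zero hna)).bijective)
      _ (fun u => if τ u = h⁻¹ then (1:ℤ) else 0) ?_).trans (hbal h⁻¹)
    intro y
    simp [hna, inv_eq_iff_eq_inv]
  -- generic lines
  have innerx : ∀ x : F, x ≠ 0 → x ≠ -a → inner x = ∑ v : F, B (x * (x + a)⁻¹) v := by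
    intro x hx0 hxa
    have hxa' : x + a ≠ 0 := fun hc => hxa (by linear_combination hc)
    rw [hinner, hB]
    refine (Fintype.sum_bijective (fun v : F => x * v)
      ((Equiv.mulLeft₀ x hx0).bijective) _ _ ?_).symm
    intro v
    have e1 : (x * v) * x⁻¹ = v := by field_simp
    have e2 : (x * v + b) * (x + a)⁻¹ = x * (x + a)⁻¹ * (v - β) + β := by
      rw [hβ]; field_simp; ring
    simp only [if_neg hxa', if_neg hx0, e1, e2, mul_inv_eq_iff_eq_mul]
  -- split the x-sum into the two special lines and the rest
  set S1 : Finset F := univ.filter (fun x : F => ¬(x = 0 ∨ x = -a)) with hS1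
  set S2 : Finset F := univ.filter (fun t : F => ¬(t = 0 ∨ t = 1)) with hS2
  have hsplit : ∑ x : F, inner x = (∑ x ∈ S1, inner x) + (inner 0 + inner (-a)) := by
    rw [← Finset.sum_filter_add_sum_filter_not univ (fun x : F => ¬(x = 0 ∨ x = -a)) inner]
    congr 1
    have : univ.filter (fun x : F => ¬¬(x = 0 ∨ x = -a)) = {0, -a} := by
      ext x; simp [or_iff_not_imp_left]
    rw [this, Finset.sum_pair (fun hc : (0:F) = -a => ha (neg_eq_zero.mp hc.symm))]
  -- change variables x ↦ t
  have stepC : ∑ x ∈ S1, inner x = ∑ t ∈ S2, ∑ v : F, B t v := by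
    refine Finset.sum_nbij' (fun x => x * (x + a)⁻¹) (fun t => a * t * (1 - t)⁻¹)
      ?_ ?_ ?_ ?_ ?_
    · intro x hx
      simp only [hS1, mem_filter, mem_univ, true_and, not_or] at hx
      obtain ⟨hx0, hxa⟩ := hx
      have hxa' : x + a ≠ 0 := fun hc => hxa (by linear_combination hc)
      simp only [hS2, mem_filter, mem_univ, true_and, not_or]
      constructor
      · exact mul_ne_zero hx0 (inv_ne_zero hxa')
      · intro hc
        rw [mul_inv_eq_one₀ hxa'] at hc
        exact ha (by linear_combination -hc)
    · intro t ht
      simp only [hS2, mem_filter, mem_univ, true_and, not_or] at ht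
      obtain ⟨ht0, ht1⟩ := ht
      have ht1' : (1:F) - t ≠ 0 := fun hc => ht1 (by linear_combination -hc)
      simp only [hS1, mem_filter, mem_univ, true_and, not_or]
      constructor
      · exact mul_ne_zero (mul_ne_zero ha ht0) (inv_ne_zero ht1')
      · intro hc
        field_simp at hc
        exact ha (by linear_combination a * hc)
    · intro x hx
      simp only [hS1, mem_filter, mem_univ, true_and, not_or] at hx
      obtain ⟨hx0, hxa⟩ := hx
      have hxa' : x + a ≠ 0 := fun hc => hxa (by linear_combination hc)
      have h1t : (1:F) - x * (x + a)⁻¹ = a * (x + a)⁻¹ := by field_simp; ring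
      show a * (x * (x + a)⁻¹) * ((1:F) - x * (x + a)⁻¹)⁻¹ = x
      rw [h1t, mul_inv_rev, inv_inv]
      field_simp
      try ring
    · intro t ht
      simp only [hS2, mem_filter, mem_univ, true_and, not_or] at ht
      obtain ⟨ht0, ht1⟩ := ht
      have ht1' : (1:F) - t ≠ 0 := fun hc => ht1 (by linear_combination -hc)
      have hden : a * t * (1 - t)⁻¹ + a = a * (1 - t)⁻¹ := by field_simp; ring
      show a * t * (1 - t)⁻¹ * (a * t * (1 - t)⁻¹ + a)⁻¹ = t
      rw [hden, mul_inv_rev, inv_inv]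
      field_simp
    · intro x hx
      simp only [hS1, mem_filter, mem_univ, true_and, not_or] at hx
      exact innerx x hx.1 hx.2
  -- swap the sums
  have stepD : ∑ t ∈ S2, ∑ v : F, B t v = ∑ v : F, ∑ t ∈ S2, B t v :=
    Finset.sum_comm
  -- cardinality facts
  have h2q : 2 ≤ Fintype.card F := Fintype.one_lt_card
  have hS2card : (S2.card : ℤ) = q - 2 := by
    have hset : S2 = univ \ {0, 1} := by
      ext t; simp [hS2]
    rw [hset, Finset.card_sdiff_of_subset (Finset.subset_univ _),
      Finset.card_insert_of_notMem (by simp), Finset.card_singleton,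
      Finset.card_univ, hq]
    omega
  -- the v = β column
  have hgβ : ∑ t ∈ S2, B t β = (q - 2) * I1 := by
    have hBβ : ∀ t, B t β = I1 := by
      intro t
      rw [hB, hI1]
      simp only [sub_self, mul_zero, zero_add, right_eq_mul]
    rw [Finset.sum_congr rfl (fun t _ => hBβ t), Finset.sum_const, nsmul_eq_mul, hS2card]
  -- the generic columns
  have hC1 : ∀ v : F, v ≠ β →
      ∑ t ∈ S2, B t v = k - (if τ β = h * τ v then (1:ℤ) else 0) - I1 := by
    intro v hv
    have hvβ : v - β ≠ 0 := sub_ne_zero.mpr hv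
    have hre : ∑ t ∈ S2, B t v
        = ∑ u ∈ univ.filter (fun u : F => ¬(u = β ∨ u = v)),
            (if τ u = h * τ v then (1:ℤ) else 0) := by
      refine Finset.sum_nbij' (fun t => t * (v - β) + β) (fun u => (u - β) * (v - β)⁻¹)
        ?_ ?_ ?_ ?_ ?_
      · intro t ht
        simp only [hS2, mem_filter, mem_univ, true_and, not_or] at ht
        simp only [mem_filter, mem_univ, true_and, not_or]
        constructor
        · intro hc
          exact ht.1 (by
            have : t * (v - β) = 0 := by linear_combination hc
            rcases mul_eq_zero.mp this with h' | h'
            · exact h'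
            · exact absurd h' hvβ)
        · intro hc
          apply ht.2
          have : (t - 1) * (v - β) = 0 := by linear_combination hc
          rcases mul_eq_zero.mp this with h' | h'
          · linear_combination h'
          · exact absurd h' hvβ
      · intro u hu
        simp only [mem_filter, mem_univ, true_and, not_or] at hu
        simp only [hS2, mem_filter, mem_univ, true_and, not_or]
        constructor
        · exact mul_ne_zero (sub_ne_zero.mpr hu.1) (inv_ne_zero hvβ)
        · intro hc
          rw [mul_inv_eq_one₀ hvβ] at hc
          exact hu.2 (by linear_combination hc)
      · intro t ht
        field_simp; ring
      · intro u hu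
        field_simp; ring
      · intro t ht
        rw [hB]
    rw [hre]
    have htot := hbal (h * τ v)
    rw [← Finset.sum_filter_add_sum_filter_not univ (fun u : F => ¬(u = β ∨ u = v))
      (fun u => if τ u = h * τ v then (1:ℤ) else 0)] at htot
    have hpair : univ.filter (fun u : F => ¬¬(u = β ∨ u = v)) = {β, v} := by
      ext u; simp [or_iff_not_imp_left]
    rw [hpair, Finset.sum_pair (Ne.symm hv)] at htot
    have hvterm : (if τ v = h * τ v then (1:ℤ) else 0) = I1 := by
      rw [hI1]; simp only [right_eq_mul]
    rw [hvterm] at htot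
    linarith
  -- sum of the indicator over v ≠ β
  have hC2 : ∑ v ∈ univ.erase β, (if τ β = h * τ v then (1:ℤ) else 0) = k - I1 := by
    have hcong : ∀ v : F, (if τ β = h * τ v then (1:ℤ) else 0)
        = (if τ v = h⁻¹ * τ β then (1:ℤ) else 0) := by
      intro v
      refine if_congr ?_ rfl rfl
      constructor
      · intro hh; rw [hh]; group
      · intro hh; rw [hh]; group
    have := Finset.add_sum_erase univ (fun v => if τ v = h⁻¹ * τ β then (1:ℤ) else 0)
      (Finset.mem_univ β)
    rw [hbal (h⁻¹ * τ β)] at this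
    have hβterm : (if τ β = h⁻¹ * τ β then (1:ℤ) else 0) = I1 := by
      rw [hI1]
      simp only [right_eq_mul, inv_eq_one]
    rw [Finset.sum_congr rfl (fun v _ => hcong v)]
    rw [hβterm] at this
    linarith
  -- assemble everything
  have hcard_erase : ((univ.erase β).card : ℤ) = q - 1 := by
    rw [Finset.card_erase_of_mem (Finset.mem_univ β), Finset.card_univ, hq]
    have h1q : 1 ≤ Fintype.card F := le_trans one_le_two h2q
    push_cast [Nat.cast_sub h1q]
    ring
  have hcol : ∑ v : F, ∑ t ∈ S2, B t v
      = (q - 2) * I1 + ((q - 1) * k - (k - I1) - (q - 1) * I1) := by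
    rw [← Finset.add_sum_erase univ (fun v => ∑ t ∈ S2, B t v) (Finset.mem_univ β), hgβ]
    congr 1
    rw [Finset.sum_congr rfl (fun v hv => hC1 v (Finset.mem_of_mem_erase hv |> fun _ =>
      (Finset.ne_of_mem_erase hv)))]
    rw [Finset.sum_sub_distrib, Finset.sum_sub_distrib, Finset.sum_const, Finset.sum_const,
      hC2, nsmul_eq_mul, nsmul_eq_mul, hcard_erase]
  rw [hsplit, stepC, stepD, hcol, inner0, innera]
  ring

private lemma core_count {F : Type*} [Field F] [Fintype F] [DecidableEq F]
    {H : Type*} [Group H] [DecidableEq H] (τ : F → H) (k : ℕ)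
    (hτ : ∀ c : H, (univ.filter fun v => τ v = c).card = k)
    (a b : F) (hz : ¬(a = 0 ∧ b = 0)) (h : H) :
    (univ.filter fun P : F × F =>
        (if P.1 + a = 0 then 1 else τ ((P.2 + b) * (P.1 + a)⁻¹)) *
        (if P.1 = 0 then (1:H) else τ (P.2 * P.1⁻¹))⁻¹ = h).card
      = Fintype.card F * k := by
  have hbal := bal_int τ k hτ
  have hN : ((univ.filter fun P : F × F =>
        (if P.1 + a = 0 then 1 else τ ((P.2 + b) * (P.1 + a)⁻¹)) *
        (if P.1 = 0 then (1:H) else τ (P.2 * P.1⁻¹))⁻¹ = h).card : ℤ)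
      = ∑ x : F, ∑ y : F, (if
        ((if x + a = 0 then 1 else τ ((y + b) * (x + a)⁻¹)) *
        (if x = 0 then (1:H) else τ (y * x⁻¹))⁻¹ = h) then (1:ℤ) else 0) := by
    rw [Finset.card_filter]
    push_cast
    rw [Fintype.sum_prod_type]
  have key : ((univ.filter fun P : F × F =>
        (if P.1 + a = 0 then 1 else τ ((P.2 + b) * (P.1 + a)⁻¹)) *
        (if P.1 = 0 then (1:H) else τ (P.2 * P.1⁻¹))⁻¹ = h).card : ℤ)
      = (Fintype.card F : ℤ) * k := by
    rw [hN]
    rcases eq_or_ne a 0 with ha | ha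
    · have hb : b ≠ 0 := fun hc => hz ⟨ha, hc⟩
      subst ha
      simp only [add_zero]
      exact bent_case_zero τ k hbal b hb h
    · exact bent_case_ne τ k hbal a b ha h
  exact_mod_cast key

private lemma exists_balanced {F H : Type*} [Fintype F] [Fintype H] [DecidableEq H]
    (n : ℕ) (hcard : Fintype.card F = Fintype.card H * n) :
    ∃ τ : F → H, ∀ c : H, (Finset.univ.filter fun v => τ v = c).card = n := by
  classical
  have e : F ≃ H × Fin n := Fintype.equivOfCardEq (by simp [hcard])
  refine ⟨fun v => (e v).1, fun c => ?_⟩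
  have h1 : (univ.filter fun v : F => (e v).1 = c).card
      = (univ.filter fun w : H × Fin n => w.1 = c).card :=
    Finset.card_equiv e (by intro v; simp)
  rw [h1]
  have h2 : (univ.filter fun w : H × Fin n => w.1 = c) = {c} ×ˢ (univ : Finset (Fin n)) := by
    ext w
    simp [Finset.mem_product, Prod.ext_iff, eq_comm]
  rw [h2, Finset.card_product]
  simp


/-- For any prime `p`, integers `m ≥ s ≥ 1`, an elementary abelian `p`-group `G` of
order `p^{2m}` and ANY group `H` of order `p^s`, there exists a bent function
`f : G → H`: for every `z ≠ 1` and `b ∈ H`, the equation `f(xz) f(x)⁻¹ = b` has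
exactly `p^{2m-s}` solutions `x ∈ G`. -/
theorem exists_bent_function_to_any_group
    (p : ℕ) [Fact p.Prime] (m s : ℕ) (hs : 1 ≤ s) (hms : s ≤ m)
    {G : Type*} [CommGroup G] [Fintype G]
    (hG : Fintype.card G = p ^ (2 * m)) (hGel : ∀ g : G, g ^ p = 1)
    {H : Type*} [Group H] [Fintype H] (hH : Fintype.card H = p ^ s) :
    ∃ f : G → H, ∀ z : G, z ≠ 1 → ∀ b : H,
      Nat.card {x : G | f (x * z) * (f x)⁻¹ = b} = p ^ (2 * m - s) := by
  classical
  have hp : p.Prime := Fact.out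
  haveI : NeZero p := ⟨hp.ne_zero⟩
  have hm : m ≠ 0 := by omega
  have hsmul : ∀ x : Additive G, p • x = 0 := by
    intro x
    apply Additive.toMul.injective
    rw [toMul_nsmul]
    exact hGel _
  letI : Module (ZMod p) (Additive G) := AddCommGroup.zmodModule hsmul
  letI F := GaloisField p m
  letI : Fintype F := Fintype.ofFinite F
  have t0 : Module (ZMod p) (Additive G) := inferInstance
  haveI : Module.Finite (ZMod p) (Additive G) := Module.Finite.of_finite
  haveI : Module.Free (ZMod p) (Additive G) := Module.Free.of_divisionRing _ _
  have hFcard : Fintype.card F = p ^ m := by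
    rw [← Nat.card_eq_fintype_card]; exact GaloisField.card p m hm
  have hfr1 : Module.finrank (ZMod p) (Additive G) = 2 * m := by
    have hc : Fintype.card (Additive G) = p ^ (2*m) := by
      rwa [Fintype.card_congr Additive.toMul]
    have key := Module.card_eq_pow_finrank (K := ZMod p) (V := Additive G)
    rw [ZMod.card, hc] at key
    exact (Nat.pow_right_injective hp.two_le key.symm)
  have hfr2 : Module.finrank (ZMod p) (F × F) = 2 * m := by
    rw [Module.finrank_prod, GaloisField.finrank p hm]
    ring
  have hLn : Nonempty (Additive G ≃ₗ[ZMod p] (F × F)) := by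
    exact ⟨LinearEquiv.ofFinrankEq _ _ (by rw [hfr1, hfr2])⟩
  obtain ⟨L⟩ := hLn
  let E : G ≃ (F × F) := Additive.ofMul.trans L.toEquiv
  have hE : ∀ x y : G, E (x * y) = E x + E y := by
    intro x y
    show L (Additive.ofMul (x * y)) = L (Additive.ofMul x) + L (Additive.ofMul y)
    rw [ofMul_mul, map_add]
  have hE1 : E (1 : G) = 0 := by
    have h11 := hE 1 1
    rw [mul_one] at h11
    exact (left_eq_add.mp h11)
  -- balanced map
  obtain ⟨τ, hτ⟩ : ∃ τ : F → H, ∀ c : H,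
      (Finset.univ.filter fun v => τ v = c).card = p ^ (m - s) := by
    apply exists_balanced
    rw [hFcard, hH, ← pow_add]
    congr 1
    omega
  -- the bent function
  refine ⟨fun g => if (E g).1 = 0 then 1 else τ ((E g).2 * ((E g).1)⁻¹), ?_⟩
  intro z hz b
  have hznz : ¬((E z).1 = 0 ∧ (E z).2 = 0) := by
    rintro ⟨h1, h2⟩
    apply hz
    apply E.injective
    rw [hE1]
    exact Prod.ext h1 h2
  have htrans : Nat.card {x : G |
        (if (E (x * z)).1 = 0 then 1 else τ ((E (x * z)).2 * ((E (x * z)).1)⁻¹)) *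
        (if (E x).1 = 0 then (1:H) else τ ((E x).2 * ((E x).1)⁻¹))⁻¹ = b}
      = Nat.card {P : F × F |
        (if P.1 + (E z).1 = 0 then 1 else τ ((P.2 + (E z).2) * (P.1 + (E z).1)⁻¹)) *
        (if P.1 = 0 then (1:H) else τ (P.2 * P.1⁻¹))⁻¹ = b} := by
    apply Nat.card_congr
    apply Equiv.subtypeEquiv E
    intro x
    rw [Set.mem_setOf_eq, Set.mem_setOf_eq, hE x z]
    rfl
  rw [htrans]
  have hfin : Nat.card {P : F × F |
        (if P.1 + (E z).1 = 0 then 1 else τ ((P.2 + (E z).2) * (P.1 + (E z).1)⁻¹)) *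
        (if P.1 = 0 then (1:H) else τ (P.2 * P.1⁻¹))⁻¹ = b}
      = (univ.filter fun P : F × F =>
        (if P.1 + (E z).1 = 0 then 1 else τ ((P.2 + (E z).2) * (P.1 + (E z).1)⁻¹)) *
        (if P.1 = 0 then (1:H) else τ (P.2 * P.1⁻¹))⁻¹ = b).card := by
    rw [Nat.card_eq_fintype_card]
    convert Fintype.card_subtype _
    · exact Iff.rfl
    · exact Classical.decPred _
  rw [hfin, core_count τ (p ^ (m - s)) hτ (E z).1 (E z).2 hznz b, hFcard, ← pow_add]
  congr 1
  omega
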